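/- Let W : ℝ → ℝ be a 1-periodic, even, Lipschitz function with Lipschitz constant 1 and let γ > 0. The homogenised velocity T ↦ f_γ(T) is monotone increasing: if T ≤ S then f_γ(T) ≤ f_γ(S). -/

import Mathlib

/-- An orbit of the linearized minimizing-movement scheme with parameter `T` and
spatial/temporal ratio `γ`: each `y (i+1)` is a global minimizer over `ℝ` of
`t ↦ T * t + W t + γ / 2 * (t - y i) ^ 2`. -/
def IsOrbit (W : ℝ → ℝ) (γ T : ℝ) (y : ℕ → ℝ) : Prop :=
  ∀ i : ℕ, ∀ t : ℝ,
    T * y (i + 1) + W (y (i + 1)) + γ / 2 * (y (i + 1) - y i) ^ 2 ≤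
      T * t + W t + γ / 2 * (t - y i) ^ 2

/-- Iterate a step function starting at 0. -/
def iterSeq (f : ℕ → ℝ → ℝ) : ℕ → ℝ
  | 0 => 0
  | n + 1 => f n (iterSeq f n)

lemma exists_min (W : ℝ → ℝ) (hlip : LipschitzWith 1 W) (γ : ℝ) (hγ : 0 < γ) (A c : ℝ) :
    ∃ m : ℝ, ∀ t : ℝ, A * m + W m + γ / 2 * (m - c) ^ 2 ≤ A * t + W t + γ / 2 * (t - c) ^ 2 := by
  set R : ℝ := 2 * (|A| + 1) / γ + 1 with hR
  have hR0 : 0 < R := by positivity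
  have hcmem : c ∈ Set.Icc (c - R) (c + R) := by constructor <;> linarith
  have hcont : ContinuousOn (fun t => A * t + W t + γ / 2 * (t - c) ^ 2)
      (Set.Icc (c - R) (c + R)) := by
    apply Continuous.continuousOn
    have := hlip.continuous
    continuity
  obtain ⟨m, hm, hmin⟩ := (isCompact_Icc).exists_isMinOn ⟨c, hcmem⟩ hcont
  refine ⟨m, fun t => ?_⟩
  by_cases ht : t ∈ Set.Icc (c - R) (c + R)
  · exact hmin ht
  · have h1 : A * m + W m + γ / 2 * (m - c) ^ 2 ≤ A * c + W c + γ / 2 * (c - c) ^ 2 :=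
      hmin hcmem
    have hWlb : |W t - W c| ≤ |t - c| := by
      have := hlip.dist_le_mul t c
      simpa [Real.dist_eq] using this
    have ht' : t < c - R ∨ c + R < t := by
      by_contra hcon
      push_neg at hcon
      exact ht ⟨hcon.1, hcon.2⟩
    have hd : R < |t - c| := by
      rcases ht' with h | h
      · rw [abs_of_neg (by linarith)]; linarith
      · rw [abs_of_pos (by linarith)]; linarith
    have hA : -(|A| * |t - c|) ≤ A * (t - c) := by
      have := abs_mul A (t - c)
      have h2 := neg_abs_le (A * (t - c))
      nlinarith [abs_nonneg A, abs_nonneg (t - c)]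
    have hsq : (t - c) ^ 2 = |t - c| ^ 2 := (sq_abs _).symm
    have hW2 : W c - |t - c| ≤ W t := by
      have := neg_abs_le (W t - W c)
      linarith
    have hγR : γ * R = 2 * (|A| + 1) + γ := by
      rw [hR, mul_add, mul_comm γ, div_mul_cancel₀ _ hγ.ne', mul_one]
    nlinarith [abs_nonneg A, abs_nonneg (t - c), sq_nonneg (|t - c| - R),
      mul_pos hγ (sub_pos.mpr hd)]

lemma comp_min (W : ℝ → ℝ) (γ T S c c' y' w : ℝ) (hγ : 0 < γ) (hTS : T ≤ S) (hcc : c' ≤ c)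
    (hy : ∀ t : ℝ, T * y' + W y' + γ / 2 * (y' - c) ^ 2 ≤ T * t + W t + γ / 2 * (t - c) ^ 2)
    (hw : ∀ t : ℝ, S * w + W w + γ / 2 * (w - c') ^ 2 ≤ S * t + W t + γ / 2 * (t - c') ^ 2) :
    ∀ t : ℝ, S * min w y' + W (min w y') + γ / 2 * (min w y' - c') ^ 2 ≤
      S * t + W t + γ / 2 * (t - c') ^ 2 := by
  rcases le_total w y' with h | h
  · rw [min_eq_left h]; exact hw
  · rw [min_eq_right h]
    by_cases hwy : w = y'
    · intro t; rw [← hwy]; exact hw t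
    · have hlt : y' < w := lt_of_le_of_ne h (Ne.symm hwy)
      have h1 := hy w
      have h2 := hw y'
      have hkey : (w - y') * ((S - T) + γ * (c - c')) ≤ 0 := by nlinarith [h1, h2]
      have hco : (S - T) + γ * (c - c') ≤ 0 :=
        le_of_not_gt fun hpos => absurd hkey (not_le.mpr (mul_pos (sub_pos.mpr hlt) hpos))
      have hγcc : 0 ≤ γ * (c - c') := mul_nonneg hγ.le (sub_nonneg.mpr hcc)
      have hS : S = T := le_antisymm (by linarith) hTS
      have h3 : c - c' ≤ 0 := by nlinarith
      have hc : c' = c := le_antisymm hcc (by linarith)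
      subst hS; subst hc
      exact hy

theorem stmt_10 (W : ℝ → ℝ) (hper : Function.Periodic W 1) (heven : ∀ x : ℝ, W (-x) = W x)
    (hlip : LipschitzWith 1 W)
    (γ : ℝ) (hγ : 0 < γ)
    (fγ : ℝ → ℝ)
    (hfγ : ∀ T : ℝ, ∀ y : ℕ → ℝ, IsOrbit W γ T y →
      Filter.Tendsto (fun i : ℕ => (y 0 - y i) / (i : ℝ)) Filter.atTop (nhds (fγ T)))
    (T S : ℝ) (hTS : T ≤ S) :
    fγ T ≤ fγ S := by
  choose F hF using fun (A c : ℝ) => exists_min W hlip γ hγ A c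
  set y : ℕ → ℝ := iterSeq (fun _ p => F T p) with hy_def
  have hy : IsOrbit W γ T y := fun i t => hF T (y i) t
  set z : ℕ → ℝ := iterSeq (fun n p => min (F S p) (y (n + 1))) with hz_def
  have hzy : ∀ i, z i ≤ y i := by
    intro i
    induction i with
    | zero => exact le_refl 0
    | succ n ih => exact min_le_right _ _
  have hz : IsOrbit W γ S z := by
    intro i t
    have hzi : z (i + 1) = min (F S (z i)) (y (i + 1)) := rfl
    rw [hzi]
    exact comp_min W γ T S (y i) (z i) (y (i + 1)) (F S (z i)) hγ hTS (hzy i)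
      (fun t => hF T (y i) t) (fun t => hF S (z i) t) t
  have h1 := hfγ T y hy
  have h2 := hfγ S z hz
  refine le_of_tendsto_of_tendsto' h1 h2 fun i => ?_
  have hy0 : y 0 = 0 := rfl
  have hz0 : z 0 = 0 := rfl
  rw [hy0, hz0]
  rcases Nat.eq_zero_or_pos i with h0 | h0
  · subst h0; simp
  · have hi : (0:ℝ) < (i:ℝ) := by exact_mod_cast h0
    exact (div_le_div_iff_of_pos_right hi).mpr (by linarith [hzy i])
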